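/- Let a and b be nonzero homogeneous polynomials in R having no common non-unit factor. Then the spread set Spr_σ(a, b) = {m ∈ ℕ | a and σ^m(b) have a common non-unit factor} is finite. -/

import Mathlib

open MvPolynomial

namespace SpreadAux

variable {F : Type*} [Field F]

/-! ### The diagonal substitution -/

/-- The diagonal substitution `X 0 ↦ c₁ • X 0`, `X 1 ↦ c₂ • X 1`. -/
noncomputable def Td (c₁ c₂ : F) : MvPolynomial (Fin 2) F →ₐ[F] MvPolynomial (Fin 2) F :=
  aeval ![C c₁ * X 0, C c₂ * X 1]

lemma finsupp_prod_fin2 {M : Type*} [CommMonoid M] (w : Fin 2 →₀ ℕ) (g : Fin 2 → ℕ → M)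
    (hg : ∀ i, g i 0 = 1) : w.prod g = g 0 (w 0) * g 1 (w 1) := by
  rw [Finsupp.prod_fintype _ _ hg, Fin.prod_univ_two]

lemma degree_fin2 (w : Fin 2 →₀ ℕ) : w.degree = w 0 + w 1 := by
  show ∑ i ∈ w.support, w i = w 0 + w 1
  rw [Finset.sum_subset (Finset.subset_univ w.support), Fin.sum_univ_two]
  intro i _ hi
  simpa using hi

lemma monomial_eq_fin2 (w : Fin 2 →₀ ℕ) (r : F) :
    (monomial w r : MvPolynomial (Fin 2) F) = C r * (X 0 ^ w 0 * X 1 ^ w 1) := by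
  rw [monomial_eq, finsupp_prod_fin2]
  intro i; exact pow_zero _

lemma Td_monomial (c₁ c₂ : F) (w : Fin 2 →₀ ℕ) (r : F) :
    Td c₁ c₂ (monomial w r) = monomial w (c₁ ^ w 0 * c₂ ^ w 1 * r) := by
  rw [Td, aeval_monomial, finsupp_prod_fin2 _ _ (fun i => pow_zero _)]
  rw [monomial_eq_fin2]
  simp only [Matrix.cons_val_zero, Matrix.cons_val_one, Matrix.head_cons, algebraMap_eq,
    mul_pow, ← C_pow, C_mul]
  ring

lemma coeff_Td (c₁ c₂ : F) (w : Fin 2 →₀ ℕ) (p : MvPolynomial (Fin 2) F) :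
    coeff w (Td c₁ c₂ p) = c₁ ^ w 0 * c₂ ^ w 1 * coeff w p := by
  induction p using MvPolynomial.induction_on' with
  | monomial w' r =>
      rw [Td_monomial]
      rw [coeff_monomial, coeff_monomial]
      split_ifs with h
      · subst h; ring
      · ring
  | add p q hp hq => simp only [map_add, coeff_add, hp, hq]; ring

lemma Td_Td (c₁ c₂ d₁ d₂ : F) (p : MvPolynomial (Fin 2) F) :
    Td c₁ c₂ (Td d₁ d₂ p) = Td (c₁ * d₁) (c₂ * d₂) p := by
  have : (Td c₁ c₂).comp (Td d₁ d₂) = Td (c₁ * d₁) (c₂ * d₂) := by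
    apply MvPolynomial.algHom_ext
    intro i
    fin_cases i <;> simp [Td, C_mul] <;> ring
  exact DFunLike.congr_fun this p

lemma Td_one (p : MvPolynomial (Fin 2) F) : Td (1 : F) 1 p = p := by
  have : Td (1 : F) 1 = AlgHom.id F (MvPolynomial (Fin 2) F) := by
    apply MvPolynomial.algHom_ext
    intro i
    fin_cases i <;> simp [Td]
  rw [this]; rfl

lemma Td_inv_Td {c₁ c₂ : F} (h₁ : c₁ ≠ 0) (h₂ : c₂ ≠ 0) (p : MvPolynomial (Fin 2) F) :
    Td c₁⁻¹ c₂⁻¹ (Td c₁ c₂ p) = p := by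
  rw [Td_Td, inv_mul_cancel₀ h₁, inv_mul_cancel₀ h₂, Td_one]

/-- The diagonal substitution as an algebra equivalence. -/
noncomputable def TdE {c₁ c₂ : F} (h₁ : c₁ ≠ 0) (h₂ : c₂ ≠ 0) :
    MvPolynomial (Fin 2) F ≃ₐ[F] MvPolynomial (Fin 2) F :=
  AlgEquiv.ofAlgHom (Td c₁ c₂) (Td c₁⁻¹ c₂⁻¹)
    (AlgHom.ext fun p => by
      simp only [AlgHom.comp_apply, AlgHom.id_apply]
      rw [Td_Td, mul_inv_cancel₀ h₁, mul_inv_cancel₀ h₂, Td_one])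
    (AlgHom.ext fun p => by
      simp only [AlgHom.comp_apply, AlgHom.id_apply]
      exact Td_inv_Td h₁ h₂ p)

lemma associated_map {f : MvPolynomial (Fin 2) F →ₐ[F] MvPolynomial (Fin 2) F}
    {x y : MvPolynomial (Fin 2) F} (h : Associated x y) : Associated (f x) (f y) := by
  obtain ⟨u, hu⟩ := h
  exact ⟨(u.isUnit.map f).unit, by rw [IsUnit.unit_spec, ← map_mul, hu]⟩

/-! ### Grading via an auxiliary polynomial ring -/

/-- Embed `F[X₀,X₁]` into `(F[X₀,X₁])[t]` by `X i ↦ (X i) * t`; the `t`-coefficients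
are the homogeneous components. -/
noncomputable def Psi : MvPolynomial (Fin 2) F →ₐ[F] Polynomial (MvPolynomial (Fin 2) F) :=
  aeval (fun i => Polynomial.C (X i) * Polynomial.X)

lemma Psi_monomial (w : Fin 2 →₀ ℕ) (r : F) :
    Psi (monomial w r) =
      Polynomial.C (monomial w r) * Polynomial.X ^ w.degree := by
  rw [Psi, aeval_monomial, Finsupp.prod_fintype _ _ (fun i => pow_zero _), Fin.prod_univ_two]
  rw [degree_fin2, monomial_eq_fin2]
  have halg : (algebraMap F (Polynomial (MvPolynomial (Fin 2) F)) r) =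
      Polynomial.C (C r) := rfl
  rw [halg]
  simp only [mul_pow, map_mul, map_pow, pow_add]
  ring

lemma coeff_Psi (p : MvPolynomial (Fin 2) F) (i : ℕ) :
    (Psi p).coeff i = homogeneousComponent i p := by
  conv_lhs => rw [p.as_sum]
  rw [map_sum, Polynomial.finset_sum_coeff]
  rw [homogeneousComponent_apply, Finset.sum_filter]
  apply Finset.sum_congr rfl
  intro w hw
  rw [Psi_monomial, Polynomial.coeff_C_mul, Polynomial.coeff_X_pow]
  by_cases h : w.degree = i
  · simp [h]
  · simp [h, Ne.symm h]

lemma Psi_ne_zero {p : MvPolynomial (Fin 2) F} (hp : p ≠ 0) : Psi p ≠ 0 := by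
  intro h
  apply hp
  calc p = ∑ i ∈ Finset.range (p.totalDegree + 1), homogeneousComponent i p :=
        (sum_homogeneousComponent p).symm
    _ = 0 := by
        apply Finset.sum_eq_zero
        intro i _
        rw [← coeff_Psi, h, Polynomial.coeff_zero]

/-- Units of `F[X₀,X₁]` are nonzero constants. -/
lemma eq_C_of_isUnit {p : MvPolynomial (Fin 2) F} (hp : IsUnit p) :
    ∃ c : F, c ≠ 0 ∧ p = C c := by
  have hPsi : IsUnit (Psi p) := hp.map Psi
  obtain ⟨r, -, hr⟩ := Polynomial.isUnit_iff.mp hPsi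
  have hcomp : ∀ i, i ≠ 0 → homogeneousComponent i p = 0 := by
    intro i hi
    rw [← coeff_Psi, ← hr, Polynomial.coeff_C, if_neg hi]
  have hp0 : p ≠ 0 := hp.ne_zero
  have h1 : p = homogeneousComponent 0 p := by
    conv_lhs => rw [← sum_homogeneousComponent p]
    apply Finset.sum_eq_single_of_mem
    · simp
    · intro i _ hi; exact hcomp i hi
  rw [homogeneousComponent_zero] at h1
  refine ⟨coeff 0 p, ?_, h1⟩
  intro h
  apply hp0
  rw [h1, h, map_zero]

lemma Psi_of_isHomogeneous {p : MvPolynomial (Fin 2) F} {n : ℕ}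
    (hp : p.IsHomogeneous n) :
    Psi p = Polynomial.C p * Polynomial.X ^ n := by
  conv_lhs => rw [p.as_sum]
  conv_rhs => rw [p.as_sum]
  rw [map_sum, map_sum, Finset.sum_mul]
  apply Finset.sum_congr rfl
  intro w hw
  rw [Psi_monomial]
  have : w.degree = n := by
    by_contra h
    exact (mem_support_iff.mp hw) (hp.coeff_eq_zero h)
  rw [this]

/-- A divisor of a nonzero homogeneous polynomial is homogeneous. -/
lemma isHomogeneous_of_dvd {p d : MvPolynomial (Fin 2) F} {n : ℕ}
    (hp : p.IsHomogeneous n) (hp0 : p ≠ 0) (hdvd : d ∣ p) :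
    ∃ k, d.IsHomogeneous k := by
  classical
  obtain ⟨e, rfl⟩ := hdvd
  have hd0 : d ≠ 0 := fun h => hp0 (by simp [h])
  have he0 : e ≠ 0 := fun h => hp0 (by simp [h])
  have hPd := Psi_ne_zero hd0
  have hPe := Psi_ne_zero he0
  have hmul : Psi d * Psi e = Polynomial.C (d * e) * Polynomial.X ^ n := by
    rw [← map_mul]; exact Psi_of_isHomogeneous hp
  have hmono : Polynomial.C (d * e) * Polynomial.X ^ n = Polynomial.monomial n (d * e) :=
    Polynomial.C_mul_X_pow_eq_monomial
  have hdeg : (Psi d).natDegree + (Psi e).natDegree = n := by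
    rw [← Polynomial.natDegree_mul hPd hPe, hmul, hmono,
      Polynomial.natDegree_monomial, if_neg hp0]
  have htdeg : (Psi d).natTrailingDegree + (Psi e).natTrailingDegree = n := by
    rw [← Polynomial.natTrailingDegree_mul hPd hPe, hmul, hmono,
      Polynomial.natTrailingDegree_monomial hp0]
  have hled : (Psi d).natTrailingDegree ≤ (Psi d).natDegree :=
    Polynomial.natTrailingDegree_le_natDegree _
  have hlee : (Psi e).natTrailingDegree ≤ (Psi e).natDegree :=
    Polynomial.natTrailingDegree_le_natDegree _
  have hk : (Psi d).natTrailingDegree = (Psi d).natDegree := by omega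
  set k := (Psi d).natDegree with hkdef
  refine ⟨k, ?_⟩
  have hcomp : ∀ i, i ≠ k → homogeneousComponent i d = 0 := by
    intro i hi
    rw [← coeff_Psi]
    rcases lt_or_gt_of_ne hi with h | h
    · exact Polynomial.coeff_eq_zero_of_lt_natTrailingDegree (by omega)
    · exact Polynomial.coeff_eq_zero_of_natDegree_lt (by omega)
  have h1 : d = homogeneousComponent k d := by
    conv_lhs => rw [← sum_homogeneousComponent d]
    rw [Finset.sum_eq_single k]
    · intro i _ hi; exact hcomp i hi
    · intro hk'
      have : d.totalDegree < k := by
        simp only [Finset.mem_range, not_lt] at hk'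
        omega
      exact homogeneousComponent_eq_zero _ _ this
  rw [h1]
  exact homogeneousComponent_isHomogeneous (n := k) (φ := d)

/-! ### The key rigidity lemma -/

/-- A homogeneous polynomial which is an eigenvector of a diagonal substitution with
"generic" eigenvalues is a monomial. -/
lemma eq_monomial_of_Td_eq {lam₁ lam₂ : F} (hl1 : lam₁ ≠ 0) (hl2 : lam₂ ≠ 0)
    (hnotroot : ∀ k : ℕ, 1 ≤ k → lam₁ ^ k ≠ lam₂ ^ k)
    {q : MvPolynomial (Fin 2) F} {e : ℕ} (hq : q.IsHomogeneous e) (hq0 : q ≠ 0)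
    {k : ℕ} (hk : 1 ≤ k) {c : F}
    (heq : Td (lam₁ ^ k) (lam₂ ^ k) q = C c * q) :
    ∃ w r, q = monomial w r := by
  have hval : ∀ w ∈ q.support, (lam₁ ^ k) ^ (w 0) * (lam₂ ^ k) ^ (w 1) = c := by
    intro w hw
    have h1 : coeff w (Td (lam₁ ^ k) (lam₂ ^ k) q) = coeff w (C c * q) := by rw [heq]
    rw [coeff_Td, coeff_C_mul] at h1
    exact mul_right_cancel₀ (mem_support_iff.mp hw) h1
  have hdeg : ∀ w ∈ q.support, w 0 + w 1 = e := by
    intro w hw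
    rw [← degree_fin2]
    by_contra h
    exact (mem_support_iff.mp hw) (hq.coeff_eq_zero h)
  have hnolt : ∀ w ∈ q.support, ∀ w' ∈ q.support, ¬ (w' 0 < w 0) := by
    intro w hw w' hw' hlt
    have h1 := (hval w hw).trans (hval w' hw').symm
    have hd1 := hdeg w hw
    have hd2 := hdeg w' hw'
    set i := w 0 - w' 0 with hi
    have hi1 : 1 ≤ i := by omega
    have hw0 : w 0 = w' 0 + i := by omega
    have hw1 : w' 1 = w 1 + i := by omega
    rw [hw0, hw1, pow_add, pow_add] at h1
    have hcancel : (lam₁ ^ k) ^ i = (lam₂ ^ k) ^ i := by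
      have hne : (lam₁ ^ k) ^ (w' 0) * (lam₂ ^ k) ^ (w 1) ≠ 0 :=
        mul_ne_zero (pow_ne_zero _ (pow_ne_zero _ hl1)) (pow_ne_zero _ (pow_ne_zero _ hl2))
      apply mul_left_cancel₀ hne
      linear_combination h1
    rw [← pow_mul, ← pow_mul] at hcancel
    exact hnotroot (k * i) (Nat.mul_pos hk hi1) hcancel
  obtain ⟨w, hw⟩ := (support_nonempty.mpr hq0)
  have huniq : q.support = {w} := by
    apply Finset.eq_singleton_iff_unique_mem.mpr
    refine ⟨hw, fun w' hw' => ?_⟩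
    have h0 : w' 0 = w 0 := by
      have := hnolt w hw w' hw'
      have := hnolt w' hw' w hw
      omega
    have h1 : w' 1 = w 1 := by
      have := hdeg w hw
      have := hdeg w' hw'
      omega
    ext i
    fin_cases i
    · exact h0
    · exact h1
  refine ⟨w, coeff w q, ?_⟩
  conv_lhs => rw [q.as_sum, huniq, Finset.sum_singleton]

end SpreadAux
open MvPolynomial SpreadAux

theorem spread_finite
    {F : Type*} [Field F] (u v : F) (hu : u ≠ 0)
    (σ : MvPolynomial (Fin 2) F →ₐ[F] MvPolynomial (Fin 2) F)
    (hσα : σ (X 0) = X 1)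
    (hσβ : σ (X 1) = u • X 0 + v • X 1)
    (lam₁ lam₂ : F)
    (hroot₁ : lam₁ ^ 2 - v * lam₁ - u = 0)
    (hroot₂ : lam₂ ^ 2 - v * lam₂ - u = 0)
    (hne : lam₁ ≠ lam₂)
    (hnotroot : ∀ k : ℕ, 1 ≤ k → lam₁ ^ k ≠ lam₂ ^ k)
    (a b : MvPolynomial (Fin 2) F) (ha : a ≠ 0) (hb : b ≠ 0)
    (da db : ℕ) (hahom : a.IsHomogeneous da) (hbhom : b.IsHomogeneous db)
    (hcop : ∀ d : MvPolynomial (Fin 2) F, d ∣ a → d ∣ b → IsUnit d) :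
    {m : ℕ | ¬ ∀ d : MvPolynomial (Fin 2) F, d ∣ a → d ∣ (⇑σ)^[m] b → IsUnit d}.Finite := by
  classical
  have hl1 : lam₁ ≠ 0 := by
    intro h; apply hu; rw [h] at hroot₁; linear_combination -hroot₁
  have hl2 : lam₂ ≠ 0 := by
    intro h; apply hu; rw [h] at hroot₂; linear_combination -hroot₂
  have hsub : lam₁ - lam₂ ≠ 0 := sub_ne_zero.mpr hne
  set c0 : F := (lam₁ - lam₂)⁻¹ with hc0def
  have hc0 : (lam₁ - lam₂) * c0 = 1 := mul_inv_cancel₀ hsub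
  set ψ : MvPolynomial (Fin 2) F →ₐ[F] MvPolynomial (Fin 2) F :=
    aeval ![C (lam₁ - v) * X 0 + X 1, C (lam₂ - v) * X 0 + X 1] with hψdef
  set ψi : MvPolynomial (Fin 2) F →ₐ[F] MvPolynomial (Fin 2) F :=
    aeval ![C c0 * (X 0 - X 1), X 0 - C ((lam₁ - v) * c0) * (X 0 - X 1)] with hψidef
  have hCc0 : (C lam₁ - C lam₂) * C c0 = (1 : MvPolynomial (Fin 2) F) := by
    rw [← C_sub, ← C_mul, hc0, C_1]
  have hψψi : ∀ p, ψ (ψi p) = p := by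
    have h : ψ.comp ψi = AlgHom.id F (MvPolynomial (Fin 2) F) := by
      apply MvPolynomial.algHom_ext
      intro i
      fin_cases i
      · show ψ (ψi (X 0)) = X 0
        simp only [hψdef, hψidef, aeval_X,
          Matrix.cons_val_zero, Matrix.cons_val_one, Matrix.head_cons,
          map_sub, map_mul, map_add, aeval_C, algebraMap_eq, C_mul, C_sub]
        linear_combination (X 0 : MvPolynomial (Fin 2) F) * hCc0
      · show ψ (ψi (X 1)) = X 1
        simp only [hψdef, hψidef, aeval_X,
          Matrix.cons_val_zero, Matrix.cons_val_one, Matrix.head_cons,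
          map_sub, map_mul, map_add, aeval_C, algebraMap_eq, C_mul, C_sub]
        linear_combination ((C v - C lam₁) * X 0 : MvPolynomial (Fin 2) F) * hCc0
    exact fun p => DFunLike.congr_fun h p
  have hψiψ : ∀ p, ψi (ψ p) = p := by
    have h : ψi.comp ψ = AlgHom.id F (MvPolynomial (Fin 2) F) := by
      apply MvPolynomial.algHom_ext
      intro i
      fin_cases i
      · show ψi (ψ (X 0)) = X 0
        simp only [hψdef, hψidef, aeval_X,
          Matrix.cons_val_zero, Matrix.cons_val_one, Matrix.head_cons,
          map_sub, map_mul, map_add, aeval_C, algebraMap_eq, C_mul, C_sub]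
        ring
      · show ψi (ψ (X 1)) = X 1
        simp only [hψdef, hψidef, aeval_X,
          Matrix.cons_val_zero, Matrix.cons_val_one, Matrix.head_cons,
          map_sub, map_mul, map_add, aeval_C, algebraMap_eq, C_mul, C_sub]
        linear_combination ((X 1 - X 0 : MvPolynomial (Fin 2) F)) * hCc0
    exact fun p => DFunLike.congr_fun h p
  have hσC : ∀ x : F, σ (C x) = C x := fun x => by
    rw [← algebraMap_eq]; exact σ.commutes x
  have hCu1 : (C u : MvPolynomial (Fin 2) F) = C lam₁ * C lam₁ - C v * C lam₁ := by
    rw [← C_mul, ← C_mul, ← C_sub]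
    congr 1
    linear_combination -hroot₁
  have hCu2 : (C u : MvPolynomial (Fin 2) F) = C lam₂ * C lam₂ - C v * C lam₂ := by
    rw [← C_mul, ← C_mul, ← C_sub]
    congr 1
    linear_combination -hroot₂
  have hcomm : ∀ p, σ (ψ p) = ψ (Td lam₁ lam₂ p) := by
    have h : σ.comp ψ = ψ.comp (Td lam₁ lam₂) := by
      apply MvPolynomial.algHom_ext
      intro i
      fin_cases i
      · show σ (ψ (X 0)) = ψ (Td lam₁ lam₂ (X 0))
        simp only [hψdef, Td, aeval_X,
          Matrix.cons_val_zero, Matrix.cons_val_one, Matrix.head_cons,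
          map_sub, map_mul, map_add, aeval_C, algebraMap_eq, C_mul, C_sub,
          hσC, hσα, hσβ, smul_eq_C_mul]
        linear_combination (X 0 : MvPolynomial (Fin 2) F) * hCu1
      · show σ (ψ (X 1)) = ψ (Td lam₁ lam₂ (X 1))
        simp only [hψdef, Td, aeval_X,
          Matrix.cons_val_zero, Matrix.cons_val_one, Matrix.head_cons,
          map_sub, map_mul, map_add, aeval_C, algebraMap_eq, C_mul, C_sub,
          hσC, hσα, hσβ, smul_eq_C_mul]
        linear_combination (X 0 : MvPolynomial (Fin 2) F) * hCu2
    exact fun p => DFunLike.congr_fun h p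
  have hiter : ∀ (m : ℕ) (p), (⇑σ)^[m] (ψ p) = ψ (Td (lam₁ ^ m) (lam₂ ^ m) p) := by
    intro m
    induction m with
    | zero => intro p; simp [Td_one]
    | succ m ih =>
        intro p
        rw [Function.iterate_succ_apply', ih, hcomm, Td_Td,
          show lam₁ * lam₁ ^ m = lam₁ ^ (m + 1) from (pow_succ' _ _).symm,
          show lam₂ * lam₂ ^ m = lam₂ ^ (m + 1) from (pow_succ' _ _).symm]
  set a' := ψi a with ha'def
  set b' := ψi b with hb'def
  have haa : ψ a' = a := hψψi a
  have hbb : ψ b' = b := hψψi b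
  have ha' : a' ≠ 0 := fun h => ha (by rw [← haa, h, map_zero])
  have hb' : b' ≠ 0 := fun h => hb (by rw [← hbb, h, map_zero])
  have hahom' : a'.IsHomogeneous da := by
    have h1 : (C c0 * (X 0 - X 1) : MvPolynomial (Fin 2) F).IsHomogeneous 1 := by
      simpa using (isHomogeneous_C (Fin 2) c0).mul
        (((isHomogeneous_X F 0).sub (isHomogeneous_X F 1)))
    have h2 : (X 0 - C ((lam₁ - v) * c0) * (X 0 - X 1) :
        MvPolynomial (Fin 2) F).IsHomogeneous 1 := by
      refine (isHomogeneous_X F 0).sub ?_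
      simpa using (isHomogeneous_C (Fin 2) ((lam₁ - v) * c0)).mul
        (((isHomogeneous_X F 0).sub (isHomogeneous_X F 1)))
    have := hahom.aeval (![C c0 * (X 0 - X 1),
        X 0 - C ((lam₁ - v) * c0) * (X 0 - X 1)] :
          Fin 2 → MvPolynomial (Fin 2) F) (fun i => by
        fin_cases i
        · simpa using h1
        · simpa using h2)
    simpa only [one_mul] using this
  have hiterb : ∀ m : ℕ, (⇑σ)^[m] b = ψ (Td (lam₁ ^ m) (lam₂ ^ m) b') := by
    intro m
    conv_lhs => rw [← hbb]
    exact hiter m b'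
  have hcop' : ∀ d, d ∣ a' → d ∣ b' → IsUnit d := by
    intro d h1 h2
    have hψd := hcop (ψ d) (by rw [← haa]; exact map_dvd ψ h1)
      (by rw [← hbb]; exact map_dvd ψ h2)
    have h3 := hψd.map ψi
    rwa [hψiψ] at h3
  have hTdinv : ∀ (m : ℕ) (p), Td (lam₁ ^ m)⁻¹ (lam₂ ^ m)⁻¹ (Td (lam₁ ^ m) (lam₂ ^ m) p) = p :=
    fun m p => Td_inv_Td (pow_ne_zero m hl1) (pow_ne_zero m hl2) p
  have hTdinv' : ∀ (m : ℕ) (p), Td (lam₁ ^ m) (lam₂ ^ m) (Td (lam₁ ^ m)⁻¹ (lam₂ ^ m)⁻¹ p) = p :=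
    fun m p => by
      rw [Td_Td, mul_inv_cancel₀ (pow_ne_zero m hl1), mul_inv_cancel₀ (pow_ne_zero m hl2), Td_one]
  set S : MvPolynomial (Fin 2) F → Set ℕ :=
    fun q => {m | q ∣ Td (lam₁ ^ m) (lam₂ ^ m) b'} with hSdef
  -- each S q for q a prime factor of a' is finite
  have Sfin : ∀ q ∈ (UniqueFactorizationMonoid.factors a').toFinset, (S q).Finite := by
    intro q hq
    rw [Multiset.mem_toFinset] at hq
    have hqprime := UniqueFactorizationMonoid.prime_of_factor q hq
    have hqa : q ∣ a' := UniqueFactorizationMonoid.dvd_of_mem_factors hq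
    have hq0 : q ≠ 0 := hqprime.ne_zero
    obtain ⟨e, hqhom⟩ := isHomogeneous_of_dvd hahom' ha' hqa
    have key : ∀ m n : ℕ, m ∈ S q → n ∈ S q → m < n →
        ¬ Associated (Td (lam₁ ^ m)⁻¹ (lam₂ ^ m)⁻¹ q) (Td (lam₁ ^ n)⁻¹ (lam₂ ^ n)⁻¹ q) := by
      intro m n hm hn hmn hass
      have h2 := associated_map (f := Td (lam₁ ^ n) (lam₂ ^ n)) hass
      rw [hTdinv' n q] at h2
      set k := n - m with hkdef
      have hk1 : 1 ≤ k := by omega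
      have h3 : Td (lam₁ ^ n) (lam₂ ^ n) (Td (lam₁ ^ m)⁻¹ (lam₂ ^ m)⁻¹ q)
          = Td (lam₁ ^ k) (lam₂ ^ k) q := by
        rw [Td_Td]
        congr 2
        · have h4 : lam₁ ^ n = lam₁ ^ k * lam₁ ^ m := by
            rw [← pow_add]; congr 1; omega
          rw [h4, mul_assoc, mul_inv_cancel₀ (pow_ne_zero m hl1), mul_one]
        · have h4 : lam₂ ^ n = lam₂ ^ k * lam₂ ^ m := by
            rw [← pow_add]; congr 1; omega
          rw [h4, mul_assoc, mul_inv_cancel₀ (pow_ne_zero m hl2), mul_one]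
      rw [h3] at h2
      obtain ⟨uu, huu⟩ := h2
      obtain ⟨cc, hcc0, hccC⟩ := eq_C_of_isUnit uu.isUnit
      have hTdq : Td (lam₁ ^ k) (lam₂ ^ k) q = C cc⁻¹ * q := by
        have h5 : Td (lam₁ ^ k) (lam₂ ^ k) q * C cc = q := by rw [← hccC]; exact huu
        calc Td (lam₁ ^ k) (lam₂ ^ k) q
            = Td (lam₁ ^ k) (lam₂ ^ k) q * (C cc * C cc⁻¹) := by
              rw [← C_mul, mul_inv_cancel₀ hcc0, C_1, mul_one]
          _ = C cc⁻¹ * (Td (lam₁ ^ k) (lam₂ ^ k) q * C cc) := by ring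
          _ = C cc⁻¹ * q := by rw [h5]
      obtain ⟨w, r, hmono⟩ := eq_monomial_of_Td_eq hl1 hl2 hnotroot hqhom hq0 hk1 hTdq
      have hr0 : r ≠ 0 := fun h => hq0 (by rw [hmono, h]; simp)
      have hwne : ∃ j, w j ≠ 0 := by
        by_contra h
        push_neg at h
        have hw0 : w = 0 := Finsupp.ext h
        apply hqprime.not_unit
        rw [hmono, hw0, monomial_zero']
        exact (isUnit_iff_ne_zero.mpr hr0).map C
      obtain ⟨j, hj⟩ := hwne
      have hXa : X j ∣ a' :=
        dvd_trans (by rw [hmono]; exact X_dvd_monomial.mpr (Or.inr hj)) hqa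
      have hXb : X j ∣ b' := by
        have h5 : Td (lam₁ ^ m)⁻¹ (lam₂ ^ m)⁻¹ q ∣ b' := by
          have h6 := map_dvd (Td (lam₁ ^ m)⁻¹ (lam₂ ^ m)⁻¹) hm
          rwa [hTdinv] at h6
        refine dvd_trans ?_ h5
        rw [hmono, Td_monomial]
        exact X_dvd_monomial.mpr (Or.inr hj)
      obtain ⟨cx, hcx0, hcxC⟩ := eq_C_of_isUnit (hcop' (X j) hXa hXb)
      have h7 : coeff (Finsupp.single j 1) (X j : MvPolynomial (Fin 2) F)
          = coeff (Finsupp.single j 1) (C cx) := by rw [← hcxC]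
      rw [coeff_X, if_pos rfl] at h7
      have h8 : (1 : F) = 0 := by
        rw [h7, coeff_C, if_neg (fun hz => one_ne_zero (Finsupp.single_eq_zero.mp hz.symm))]
      exact one_ne_zero h8
    -- choose an associated factor of b' for each m ∈ S q
    have hchoice : ∀ m, m ∈ S q → ∃ g, g ∈ UniqueFactorizationMonoid.factors b' ∧
        Associated (Td (lam₁ ^ m)⁻¹ (lam₂ ^ m)⁻¹ q) g := by
      intro m hm
      have hdvd : Td (lam₁ ^ m)⁻¹ (lam₂ ^ m)⁻¹ q ∣ b' := by
        have h6 := map_dvd (Td (lam₁ ^ m)⁻¹ (lam₂ ^ m)⁻¹) hm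
        rwa [hTdinv] at h6
      have hsymm : Td (lam₁ ^ m)⁻¹ (lam₂ ^ m)⁻¹ q
          = (TdE (pow_ne_zero m hl1) (pow_ne_zero m hl2)).symm q := rfl
      have hirr : Irreducible (Td (lam₁ ^ m)⁻¹ (lam₂ ^ m)⁻¹ q) := by
        rw [hsymm]
        exact (MulEquiv.irreducible_iff
          ((TdE (pow_ne_zero m hl1) (pow_ne_zero m hl2)).symm)).mpr hqprime.irreducible
      obtain ⟨g, hg1, hg2⟩ :=
        UniqueFactorizationMonoid.exists_mem_factors_of_dvd hb' hirr hdvd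
      exact ⟨g, hg1, hg2⟩
    set gg : ℕ → MvPolynomial (Fin 2) F :=
      fun m => if hm : m ∈ S q then (hchoice m hm).choose else 0 with hggdef
    have hgg1 : ∀ m (hm : m ∈ S q), gg m ∈ UniqueFactorizationMonoid.factors b' := by
      intro m hm
      rw [hggdef]; simp only [dif_pos hm]
      exact (hchoice m hm).choose_spec.1
    have hgg2 : ∀ m (hm : m ∈ S q),
        Associated (Td (lam₁ ^ m)⁻¹ (lam₂ ^ m)⁻¹ q) (gg m) := by
      intro m hm
      rw [hggdef]; simp only [dif_pos hm]
      exact (hchoice m hm).choose_spec.2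
    have hinj : Set.InjOn gg (S q) := by
      intro m hm n hn hmn
      by_contra hne'
      rcases lt_or_gt_of_ne hne' with h | h
      · have h8 := (hgg2 n hn).symm
        rw [← hmn] at h8
        exact key m n hm hn h ((hgg2 m hm).trans h8)
      · have h8 := (hgg2 m hm).symm
        rw [hmn] at h8
        exact key n m hn hm h ((hgg2 n hn).trans h8)
    have himg : (gg '' S q).Finite := by
      apply Set.Finite.subset (UniqueFactorizationMonoid.factors b').toFinset.finite_toSet
      rintro _ ⟨m, hm, rfl⟩
      exact Multiset.mem_toFinset.mpr (hgg1 m hm)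
    exact Set.Finite.of_finite_image himg hinj
  -- the target set is contained in the union of the S q
  have hsubset : {m : ℕ | ¬ ∀ d : MvPolynomial (Fin 2) F,
      d ∣ a → d ∣ (⇑σ)^[m] b → IsUnit d} ⊆
      ⋃ q ∈ (UniqueFactorizationMonoid.factors a').toFinset, S q := by
    intro m hm
    simp only [Set.mem_setOf_eq] at hm
    push_neg at hm
    obtain ⟨d, hd1, hd2, hd3⟩ := hm
    have hd'a : ψi d ∣ a' := map_dvd ψi hd1
    have hd'b : ψi d ∣ Td (lam₁ ^ m) (lam₂ ^ m) b' := by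
      have h6 := map_dvd ψi hd2
      rwa [hiterb m, hψiψ] at h6
    have hd'nu : ¬ IsUnit (ψi d) := fun h => hd3 (by
      have h7 := h.map ψ
      rwa [hψψi] at h7)
    have hd'0 : ψi d ≠ 0 := fun h => ha' (zero_dvd_iff.mp (h ▸ hd'a))
    obtain ⟨p, hpirr, hpd⟩ := WfDvdMonoid.exists_irreducible_factor hd'nu hd'0
    obtain ⟨q, hqmem, hpq⟩ :=
      UniqueFactorizationMonoid.exists_mem_factors_of_dvd ha' hpirr (hpd.trans hd'a)
    apply Set.mem_biUnion (Multiset.mem_toFinset.mpr hqmem)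
    exact (hpq.symm.dvd).trans (hpd.trans hd'b)
  exact Set.Finite.subset (Set.Finite.biUnion
    ((UniqueFactorizationMonoid.factors a').toFinset.finite_toSet) Sfin) hsubset
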